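/- Let t ≥ s ≥ 2 be integers, let G be a bipartite graph with bipartition (A, B) that contains no copy of H_{s,t}, and let M be an (s−1)-matching in G. Then the number of s-matchings L contained in the neighbourhood graph N(M) such that the pair (M, L) is 2t-correlated is at most (s−1)(t−1) · e(N(M))^{s−1} · v(N(M)). -/

import Mathlib

open SimpleGraph

/-- `G` contains a copy of `H` (an injective graph homomorphism from `H` to `G`). -/
def SimpleGraph.Contains {α β : Type*} (G : SimpleGraph α) (H : SimpleGraph β) : Prop :=
  ∃ f : H →g G, Function.Injective f

/-- The graph `H_{s,t}`: two vertex-disjoint copies of `K_{s,t}` together with a perfect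
matching joining the two images of every vertex of `K_{s,t}`. -/
def Hgraph (s t : ℕ) : SimpleGraph ((Fin s ⊕ Fin t) × Bool) :=
  SimpleGraph.fromRel fun x y =>
    (x.2 = y.2 ∧ (completeBipartiteGraph (Fin s) (Fin t)).Adj x.1 y.1) ∨
    (x.2 ≠ y.2 ∧ x.1 = y.1)

/-- The common neighbourhood `N(S) = ⋂_{v ∈ S} N(v)` of a set `S` of vertices in `G`. -/
def commonNbrs {V : Type*} (G : SimpleGraph V) (S : Set V) : Set V :=
  ⋂ v ∈ S, G.neighborSet v

/-- The set `V(M)` of vertices covered by a set `M` of edges. -/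
def matchVerts {V : Type*} (M : Finset (Sym2 V)) : Set V :=
  {v | ∃ e ∈ M, v ∈ e}

/-- An `r`-matching in `G`: a set of `r` pairwise vertex-disjoint edges of `G`. -/
def IsMatchingIn {V : Type*} (G : SimpleGraph V) (r : ℕ) (M : Finset (Sym2 V)) : Prop :=
  M.card = r ∧ ↑M ⊆ G.edgeSet ∧
    (M : Set (Sym2 V)).Pairwise fun e f => ∀ x : V, ¬(x ∈ e ∧ x ∈ f)

/-- The neighbourhood graph `N(M)` of a matching `M` in the bipartite graph `G` with
bipartition `(A, B)`: the bipartite subgraph of `G` induced by the vertex sets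
`N(B_M) \ V(M)` and `N(A_M) \ V(M)`, where `A_M = V(M) ∩ A` and `B_M = V(M) ∩ B`. -/
def nbrGraph {V : Type*} (G : SimpleGraph V) (A B : Set V) (M : Finset (Sym2 V)) :
    SimpleGraph V :=
  SimpleGraph.fromRel fun u v =>
    G.Adj u v ∧ u ∈ commonNbrs G (matchVerts M ∩ B) \ matchVerts M ∧
      v ∈ commonNbrs G (matchVerts M ∩ A) \ matchVerts M

/-- The pair `(M, L)` is `c`-correlated: `L` is a subgraph of `N(M)` (i.e. `M ∼ L`) and some
vertex of `V(M)` has degree at least `c` in `N(L)`. -/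
def Correlated {V : Type*} (G : SimpleGraph V) (A B : Set V) (c : ℕ)
    (M L : Finset (Sym2 V)) : Prop :=
  ↑L ⊆ (nbrGraph G A B M).edgeSet ∧
    ∃ v ∈ matchVerts M, c ≤ (((nbrGraph G A B L).neighborSet v).ncard : ℕ)



/-- choose distinct representatives -/
lemma exists_injective_mem {V : Type*} [DecidableEq V] :
    ∀ (n : ℕ) (S : Fin n → Finset V), (∀ k, n ≤ (S k).card) →
      ∃ u : Fin n → V, Function.Injective u ∧ ∀ k, u k ∈ S k := by
  intro n
  induction n with
  | zero => exact fun S _ => ⟨Fin.elim0, fun i => i.elim0, fun k => k.elim0⟩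
  | succ n ih =>
    intro S hS
    obtain ⟨x0, hx0⟩ : (S 0).Nonempty := Finset.card_pos.mp (by have := hS 0; omega)
    obtain ⟨u', hu'inj, hu'mem⟩ := ih (fun k => (S k.succ).erase x0) (by
      intro k
      show n ≤ ((S k.succ).erase x0).card
      have := hS k.succ
      have := Finset.pred_card_le_card_erase (a := x0) (s := S k.succ)
      omega)
    refine ⟨Fin.cases x0 u', ?_, ?_⟩
    · intro i j hij
      induction i using Fin.cases with
      | zero =>
        induction j using Fin.cases with
        | zero => rfl
        | succ j =>
          exfalso
          exact (Finset.ne_of_mem_erase (hu'mem j)) (by simpa using hij.symm)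
      | succ i =>
        induction j using Fin.cases with
        | zero =>
          exfalso
          exact (Finset.ne_of_mem_erase (hu'mem i)) (by simpa using hij)
        | succ j => simpa using congrArg Fin.succ (hu'inj (by simpa using hij))
    · intro k
      induction k using Fin.cases with
      | zero => simpa using hx0
      | succ k => simpa using Finset.mem_of_mem_erase (hu'mem k)



lemma contains_Hgraph_of {V : Type*} (G : SimpleGraph V) (s t : ℕ)
    (A B : Set V) (hdisj : Disjoint A B)
    (p q : Fin s → V) (r r' : Fin t → V)
    (hpA : ∀ i, p i ∈ A) (hqB : ∀ i, q i ∈ B) (hrB : ∀ k, r k ∈ B) (hr'A : ∀ k, r' k ∈ A)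
    (hp : Function.Injective p) (hq : Function.Injective q)
    (hr : Function.Injective r) (hr' : Function.Injective r')
    (hpr' : ∀ i k, p i ≠ r' k) (hqr : ∀ i k, q i ≠ r k)
    (hpr : ∀ i k, G.Adj (p i) (r k)) (hqr' : ∀ i k, G.Adj (q i) (r' k))
    (hm1 : ∀ i, G.Adj (p i) (q i)) (hm2 : ∀ k, G.Adj (r k) (r' k)) :
    G.Contains (Hgraph s t) := by
  have hAB : ∀ x ∈ A, ∀ y ∈ B, x ≠ y := fun x hx y hy hxy =>
    Set.disjoint_left.mp hdisj hx (hxy ▸ hy)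
  let f : (Fin s ⊕ Fin t) × Bool → V := fun x =>
    match x with
    | (Sum.inl i, false) => p i
    | (Sum.inr k, false) => r k
    | (Sum.inl i, true) => q i
    | (Sum.inr k, true) => r' k
  refine ⟨⟨f, ?_⟩, ?_⟩
  · rintro ⟨i | k, c1⟩ ⟨j | l, c2⟩ h <;>
      rw [Hgraph, SimpleGraph.fromRel_adj] at h <;>
      obtain ⟨hne, h⟩ := h <;>
      rcases c1 <;> rcases c2 <;>
      simp only [completeBipartiteGraph_adj, Sum.isLeft_inl, Sum.isRight_inl,
        Sum.isLeft_inr, Sum.isRight_inr, ne_eq, Prod.mk.injEq, and_true, true_and,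
        and_false, false_and, or_false, false_or, and_self, not_true_eq_false,
        not_false_eq_true, Sum.inl.injEq, Sum.inr.injEq, reduceCtorEq, or_self] at h <;>
      first
        | exact h.elim
        | exact hpr _ _
        | exact (hpr _ _).symm
        | exact hqr' _ _
        | exact (hqr' _ _).symm
        | ((obtain rfl | rfl := h) <;>
            first
              | exact hm1 _
              | exact (hm1 _).symm
              | exact hm2 _
              | exact (hm2 _).symm)
  · rintro ⟨i | k, c1⟩ ⟨j | l, c2⟩ h <;>
      rcases c1 <;> rcases c2 <;>
      first
        | exact congrArg (fun i => (Sum.inl i, false)) (hp h)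
        | exact congrArg (fun i => (Sum.inl i, true)) (hq h)
        | exact congrArg (fun k => (Sum.inr k, false)) (hr h)
        | exact congrArg (fun k => (Sum.inr k, true)) (hr' h)
        | exact absurd h (hAB _ (hpA _) _ (hqB _))
        | exact absurd h (hAB _ (hpA _) _ (hrB _))
        | exact absurd h.symm (hAB _ (hpA _) _ (hqB _))
        | exact absurd h.symm (hAB _ (hpA _) _ (hrB _))
        | exact absurd h (hAB _ (hr'A _) _ (hqB _))
        | exact absurd h (hAB _ (hr'A _) _ (hrB _))
        | exact absurd h.symm (hAB _ (hr'A _) _ (hqB _))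
        | exact absurd h.symm (hAB _ (hr'A _) _ (hrB _))
        | exact absurd h (hpr' _ _)
        | exact absurd h.symm (hpr' _ _)
        | exact absurd h (hqr _ _)
        | exact absurd h.symm (hqr _ _)

lemma adj_of_mem_commonNbrs {V : Type*} {G : SimpleGraph V} {S : Set V} {u w : V}
    (hu : u ∈ commonNbrs G S) (hw : w ∈ S) : G.Adj w u := by
  have := Set.mem_iInter.mp hu w
  exact Set.mem_iInter.mp this hw

lemma matchVerts_insert {V : Type*} (e : Sym2 V) (N : Finset (Sym2 V)) [DecidableEq (Sym2 V)] :
    matchVerts (insert e N) = {x | x ∈ e} ∪ matchVerts N := by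
  ext x
  simp [matchVerts, Finset.mem_insert, or_and_right, exists_or]

lemma matchVerts_mono {V : Type*} {N N' : Finset (Sym2 V)} (h : N ⊆ N') :
    matchVerts N ⊆ matchVerts N' := by
  rintro x ⟨e, he, hx⟩
  exact ⟨e, h he, hx⟩

lemma ncard_matchVerts_inter {V : Type*} [Fintype V] (A B : Set V) (hdisj : Disjoint A B)
    (N : Finset (Sym2 V))
    (hedges : ∀ e ∈ N, ∃ a b, e = s(a, b) ∧ a ∈ A ∧ b ∈ B)
    (hpair : (N : Set (Sym2 V)).Pairwise fun e f => ∀ x : V, ¬(x ∈ e ∧ x ∈ f)) :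
    (matchVerts N ∩ A).ncard = N.card := by
  classical
  induction N using Finset.induction_on with
  | empty => simp [matchVerts]
  | insert e N hnotmem ih =>
    obtain ⟨a, b, rfl, haA, hbB⟩ := hedges _ (Finset.mem_insert_self _ _)
    have hb_notA : b ∉ A := fun hbA => Set.disjoint_left.mp hdisj hbA hbB
    have hset : matchVerts (insert s(a, b) N) ∩ A = insert a (matchVerts N ∩ A) := by
      rw [matchVerts_insert]
      ext x
      constructor
      · rintro ⟨hx1 | hx2, hxA⟩
        · rcases Sym2.mem_iff.mp hx1 with rfl | rfl
          · exact Set.mem_insert _ _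
          · exact absurd hxA hb_notA
        · exact Set.mem_insert_of_mem _ ⟨hx2, hxA⟩
      · rintro (rfl | ⟨hx2, hxA⟩)
        · exact ⟨Or.inl (Sym2.mem_mk_left _ _), haA⟩
        · exact ⟨Or.inr hx2, hxA⟩
    have hanotin : a ∉ matchVerts N ∩ A := by
      rintro ⟨⟨f, hf, haf⟩, -⟩
      exact hpair (Finset.mem_coe.mpr (Finset.mem_insert_self _ _))
        (Finset.mem_coe.mpr (Finset.mem_insert_of_mem hf))
        (fun h => hnotmem (h ▸ hf)) a ⟨Sym2.mem_mk_left _ _, haf⟩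
    rw [hset, Set.ncard_insert_of_notMem hanotin (Set.toFinite _),
      Finset.card_insert_of_notMem hnotmem,
      ih (fun e he => hedges e (Finset.mem_insert_of_mem he))
        (hpair.mono (by intro x hx; simp only [Finset.coe_insert, Set.mem_insert_iff]; exact Or.inr hx))]

lemma nbrGraph_adj {V : Type*} (G : SimpleGraph V) (A B : Set V) (M : Finset (Sym2 V))
    (u v : V) : (nbrGraph G A B M).Adj u v ↔ u ≠ v ∧
      ((G.Adj u v ∧ u ∈ commonNbrs G (matchVerts M ∩ B) \ matchVerts M ∧
          v ∈ commonNbrs G (matchVerts M ∩ A) \ matchVerts M) ∨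
        (G.Adj v u ∧ v ∈ commonNbrs G (matchVerts M ∩ B) \ matchVerts M ∧
          u ∈ commonNbrs G (matchVerts M ∩ A) \ matchVerts M)) := by
  rw [nbrGraph, SimpleGraph.fromRel_adj]

lemma nbrGraph_comm {V : Type*} (G : SimpleGraph V) (A B : Set V) (M : Finset (Sym2 V)) :
    nbrGraph G B A M = nbrGraph G A B M := by
  ext u v
  rw [nbrGraph_adj, nbrGraph_adj, G.adj_comm]
  tauto

lemma nbrGraph_edge {V : Type*} {G : SimpleGraph V} {A B : Set V} {M : Finset (Sym2 V)}
    {e : Sym2 V} (he : e ∈ (nbrGraph G A B M).edgeSet) :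
    ∃ a b, e = s(a, b) ∧ G.Adj a b ∧
      a ∈ commonNbrs G (matchVerts M ∩ B) \ matchVerts M ∧
      b ∈ commonNbrs G (matchVerts M ∩ A) \ matchVerts M := by
  induction e using Sym2.ind with
  | _ x y =>
    rw [SimpleGraph.mem_edgeSet, nbrGraph_adj] at he
    obtain ⟨-, ⟨h1, h2, h3⟩ | ⟨h1, h2, h3⟩⟩ := he
    · exact ⟨x, y, rfl, h1, h2, h3⟩
    · exact ⟨y, x, Sym2.eq_swap.symm, h1, h2, h3⟩

lemma nbrGraph_le {V : Type*} {G : SimpleGraph V} {A B : Set V} {M : Finset (Sym2 V)}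
    {u v : V} (h : (nbrGraph G A B M).Adj u v) : G.Adj u v := by
  rw [nbrGraph_adj] at h
  obtain ⟨-, ⟨h1, -, -⟩ | ⟨h1, -, -⟩⟩ := h
  · exact h1
  · exact h1.symm

lemma exists_enum {V : Type*} (S : Set V) (hf : S.Finite) (n : ℕ) (h : S.ncard = n) :
    ∃ e : Fin n → V, Function.Injective e ∧ ∀ i, e i ∈ S := by
  have hc : hf.toFinset.card = n := by rw [← Set.ncard_eq_toFinset_card S hf]; exact h
  refine ⟨fun i => (hf.toFinset.equivFin.symm (Fin.cast hc.symm i)).1, ?_, ?_⟩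
  · intro i j hij
    have h2 := hf.toFinset.equivFin.symm.injective (Subtype.ext hij)
    simpa [Fin.ext_iff] using congrArg Fin.val h2
  · intro i
    exact hf.mem_toFinset.mp (hf.toFinset.equivFin.symm (Fin.cast hc.symm i)).2


lemma fin_cases_injective {n : ℕ} {V : Type*} (x : V) (e : Fin n → V)
    (he : Function.Injective e) (hx : ∀ i, x ≠ e i) :
    Function.Injective (Fin.cases x e : Fin (n + 1) → V) := by
  intro i j hij
  induction i using Fin.cases with
  | zero =>
    induction j using Fin.cases with
    | zero => rfl
    | succ j => exact absurd (by simpa using hij) (hx j)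
  | succ i =>
    induction j using Fin.cases with
    | zero => exact absurd (by simpa using hij.symm) (hx i)
    | succ j => simpa using congrArg Fin.succ (he (by simpa using hij))

lemma core_bound {V : Type*} [Fintype V] [DecidableEq V] (G : SimpleGraph V)
    (A B : Set V) (hdisj : Disjoint A B)
    (hbip : ∀ ⦃u v⦄, G.Adj u v → (u ∈ A ∧ v ∈ B) ∨ (u ∈ B ∧ v ∈ A))
    (n t : ℕ) (hn : 1 ≤ n) (hst : n + 1 ≤ t)
    (hfree : ¬ G.Contains (Hgraph (n + 1) t))
    (M : Finset (Sym2 V)) (hM : IsMatchingIn G n M)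
    (v : V) (hvA : v ∈ A) (hvM : v ∈ matchVerts M)
    (L' : Finset (Sym2 V)) (b : V)
    (hb : b ∈ commonNbrs G (matchVerts M ∩ A) \ matchVerts M) :
    {a : V | IsMatchingIn (nbrGraph G A B M) (n + 1) (insert s(a, b) L') ∧
        s(a, b) ∉ L' ∧
        2 * t ≤ ((nbrGraph G A B (insert s(a, b) L')).neighborSet v).ncard}.ncard ≤ t - 1 := by
  classical
  by_contra hcon
  push_neg at hcon
  have htS : t ≤ {a : V | IsMatchingIn (nbrGraph G A B M) (n + 1) (insert s(a, b) L') ∧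
      s(a, b) ∉ L' ∧
      2 * t ≤ ((nbrGraph G A B (insert s(a, b) L')).neighborSet v).ncard}.ncard := by omega
  obtain ⟨F, hFsub, hFcard⟩ := Set.exists_subset_card_eq htS
  obtain ⟨aF, haFinj, haFmem⟩ := exists_enum F (Set.toFinite F) t hFcard
  have haS : ∀ k, IsMatchingIn (nbrGraph G A B M) (n + 1) (insert s(aF k, b) L') ∧
      s(aF k, b) ∉ L' ∧
      2 * t ≤ ((nbrGraph G A B (insert s(aF k, b) L')).neighborSet v).ncard :=
    fun k => hFsub (haFmem k)
  set Lk : Fin t → Finset (Sym2 V) := fun k => insert s(aF k, b) L' with hLkdef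
  have hk1 : ∀ k, IsMatchingIn (nbrGraph G A B M) (n + 1) (Lk k) := fun k => (haS k).1
  have hk2 : ∀ k, s(aF k, b) ∉ L' := fun k => (haS k).2.1
  have hk3 : ∀ k, 2 * t ≤ ((nbrGraph G A B (Lk k)).neighborSet v).ncard := fun k => (haS k).2.2
  have k0 : Fin t := ⟨0, by omega⟩
  -- basic properties of M
  have hMedge : ∀ e ∈ M, ∃ x y, e = s(x, y) ∧ x ∈ A ∧ y ∈ B := by
    intro e he
    have he' : e ∈ G.edgeSet := hM.2.1 he
    induction e using Sym2.ind with
    | _ x y =>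
      rcases hbip (G.mem_edgeSet.mp he') with ⟨hx, hy⟩ | ⟨hx, hy⟩
      · exact ⟨x, y, rfl, hx, hy⟩
      · exact ⟨y, x, Sym2.eq_swap.symm, hy, hx⟩
  have hMne : M.Nonempty := Finset.card_pos.mp (by rw [hM.1]; omega)
  have hBMne : (matchVerts M ∩ B).Nonempty := by
    obtain ⟨e, he⟩ := hMne
    obtain ⟨x, y, rfl, hx, hy⟩ := hMedge e he
    exact ⟨y, ⟨s(x, y), he, Sym2.mem_mk_right _ _⟩, hy⟩
  have hXA : commonNbrs G (matchVerts M ∩ B) ⊆ A := by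
    intro u hu
    obtain ⟨w, hw⟩ := hBMne
    rcases hbip (adj_of_mem_commonNbrs hu hw) with ⟨h1, h2⟩ | ⟨h1, h2⟩
    · exact absurd hw.2 (Set.disjoint_left.mp hdisj h1)
    · exact h2
  have hYB : commonNbrs G (matchVerts M ∩ A) ⊆ B := by
    intro u hu
    obtain ⟨w, hwM, hwA⟩ : (matchVerts M ∩ A).Nonempty := ⟨v, hvM, hvA⟩
    rcases hbip (adj_of_mem_commonNbrs hu ⟨hwM, hwA⟩) with ⟨h1, h2⟩ | ⟨h1, h2⟩
    · exact h2
    · exact absurd hwA (fun h => Set.disjoint_left.mp hdisj h h1)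
  have hbB : b ∈ B := hYB hb.1
  have hbnotM : b ∉ matchVerts M := hb.2
  have hedgeLk : ∀ k, s(aF k, b) ∈ (nbrGraph G A B M).edgeSet :=
    fun k => (hk1 k).2.1 (Finset.mem_insert_self _ _)
  have haX : ∀ k, (aF k ∈ commonNbrs G (matchVerts M ∩ B) \ matchVerts M) ∧ G.Adj (aF k) b := by
    intro k
    obtain ⟨x, y, hxy, hadj, hx, hy⟩ := nbrGraph_edge (hedgeLk k)
    rcases Sym2.eq_iff.mp hxy with ⟨rfl, rfl⟩ | ⟨h1, h2⟩
    · exact ⟨hx, hadj⟩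
    · have hbX : b ∈ commonNbrs G (matchVerts M ∩ B) := by rw [h2]; exact hx.1
      exact absurd (hXA hbX) (fun hA => Set.disjoint_left.mp hdisj hA hbB)
  have haA : ∀ k, aF k ∈ A := fun k => hXA (haX k).1.1
  have hanotM : ∀ k, aF k ∉ matchVerts M := fun k => (haX k).1.2
  -- L' facts
  have hL'sub : ∀ k, L' ⊆ Lk k := fun k => Finset.subset_insert _ _
  have hL'edges : ∀ e ∈ L', e ∈ (nbrGraph G A B M).edgeSet :=
    fun e he => (hk1 k0).2.1 (hL'sub k0 he)
  have hL'pair : (↑L' : Set (Sym2 V)).Pairwise (fun e f => ∀ x : V, ¬(x ∈ e ∧ x ∈ f)) :=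
    ((hk1 k0).2.2).mono (by intro x hx; exact hL'sub k0 hx)
  have hL'card : L'.card = n := by
    have h := (hk1 k0).1
    rw [hLkdef] at h
    simp only at h
    rw [Finset.card_insert_of_notMem (hk2 k0)] at h
    omega
  have hL'endpoints : ∀ e ∈ L', ∃ x y, e = s(x, y) ∧ x ∈ A ∧ y ∈ B := by
    intro e he
    obtain ⟨x, y, rfl, hadj, hx, hy⟩ := nbrGraph_edge (hL'edges e he)
    exact ⟨x, y, rfl, hXA hx.1, hYB hy.1⟩
  have hA'card : (matchVerts L' ∩ A).ncard = n := by
    rw [ncard_matchVerts_inter A B hdisj L' hL'endpoints hL'pair, hL'card]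
  have hBMcard : (matchVerts M ∩ B).ncard = n := by
    rw [ncard_matchVerts_inter B A hdisj.symm M (fun e he => by
      obtain ⟨x, y, rfl, hx, hy⟩ := hMedge e he
      exact ⟨y, x, Sym2.eq_swap.symm, hy, hx⟩) hM.2.2, hM.1]
  have hA'X : matchVerts L' ∩ A ⊆ commonNbrs G (matchVerts M ∩ B) \ matchVerts M := by
    rintro x ⟨⟨e, he, hxe⟩, hxA⟩
    obtain ⟨x', y', hxy', hadj, hx', hy'⟩ := nbrGraph_edge (hL'edges e he)
    subst hxy'
    rcases Sym2.mem_iff.mp hxe with rfl | rfl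
    · exact hx'
    · exact absurd (hYB hy'.1) (fun hB => Set.disjoint_left.mp hdisj hxA hB)
  -- membership of endpoints of Lk
  have hbLkB : ∀ k, b ∈ matchVerts (Lk k) ∩ B :=
    fun k => ⟨⟨s(aF k, b), Finset.mem_insert_self _ _, Sym2.mem_mk_right _ _⟩, hbB⟩
  have haLkA : ∀ k, aF k ∈ matchVerts (Lk k) ∩ A :=
    fun k => ⟨⟨s(aF k, b), Finset.mem_insert_self _ _, Sym2.mem_mk_left _ _⟩, haA k⟩
  have hYkB : ∀ k, commonNbrs G (matchVerts (Lk k) ∩ A) ⊆ B := by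
    intro k u hu
    rcases hbip (adj_of_mem_commonNbrs hu (haLkA k)) with ⟨h1, h2⟩ | ⟨h1, h2⟩
    · exact h2
    · exact absurd (haA k) (fun h => Set.disjoint_left.mp hdisj h h1)
  have hnbh : ∀ k, (nbrGraph G A B (Lk k)).neighborSet v ⊆
      {u | G.Adj v u ∧ u ∈ commonNbrs G (matchVerts (Lk k) ∩ A) \ matchVerts (Lk k)} := by
    intro k u hu
    rw [SimpleGraph.mem_neighborSet, nbrGraph_adj] at hu
    obtain ⟨hne, ⟨h1, h2, h3⟩ | ⟨h1, h2, h3⟩⟩ := hu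
    · exact ⟨h1, h3⟩
    · exact absurd (hYkB k h3.1) (fun hB => Set.disjoint_left.mp hdisj hvA hB)
  have hvXk : ∀ k, v ∈ commonNbrs G (matchVerts (Lk k) ∩ B) \ matchVerts (Lk k) := by
    intro k
    obtain ⟨u, hu⟩ := Set.nonempty_of_ncard_ne_zero
      (s := (nbrGraph G A B (Lk k)).neighborSet v) (by have := hk3 k; omega)
    rw [SimpleGraph.mem_neighborSet, nbrGraph_adj] at hu
    obtain ⟨hne, ⟨h1, h2, h3⟩ | ⟨h1, h2, h3⟩⟩ := hu
    · exact h2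
    · exact absurd (hYkB k h3.1) (fun hB => Set.disjoint_left.mp hdisj hvA hB)
  have hvb : G.Adj v b := (adj_of_mem_commonNbrs (hvXk k0).1 (hbLkB k0)).symm
  have hvnotLk : ∀ k, v ∉ matchVerts (Lk k) := fun k => (hvXk k).2
  -- selecting the u's
  have hUcard : ∀ k, t ≤ ((nbrGraph G A B (Lk k)).neighborSet v \ (matchVerts M ∩ B)).ncard := by
    intro k
    have h1 := Set.ncard_le_ncard_diff_add_ncard ((nbrGraph G A B (Lk k)).neighborSet v)
      (matchVerts M ∩ B) (Set.toFinite _)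
    have h2 := hk3 k
    rw [hBMcard] at h1
    omega
  obtain ⟨uF, huFinj, huFmem'⟩ := exists_injective_mem t
    (fun k => ((nbrGraph G A B (Lk k)).neighborSet v \ (matchVerts M ∩ B)).toFinset) (by
      intro k
      show t ≤ ((nbrGraph G A B (Lk k)).neighborSet v \ (matchVerts M ∩ B)).toFinset.card
      rw [← Set.ncard_eq_toFinset_card']
      exact hUcard k)
  have huFmem : ∀ k, uF k ∈ (nbrGraph G A B (Lk k)).neighborSet v \ (matchVerts M ∩ B) := by
    intro k
    have := huFmem' k
    simpa [Set.mem_toFinset] using this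
  have huProps : ∀ k, G.Adj v (uF k) ∧
      uF k ∈ commonNbrs G (matchVerts (Lk k) ∩ A) ∧ uF k ∉ matchVerts (Lk k) := by
    intro k
    have h1 := hnbh k (huFmem k).1
    exact ⟨h1.1, h1.2.1, h1.2.2⟩
  have huB : ∀ k, uF k ∈ B := by
    intro k
    rcases hbip (huProps k).1 with ⟨h1, h2⟩ | ⟨h1, h2⟩
    · exact h2
    · exact absurd hvA (fun h => Set.disjoint_left.mp hdisj h h1)
  have hunotBM : ∀ k, uF k ∉ matchVerts M ∩ B := fun k => (huFmem k).2
  have hanotL' : ∀ k, aF k ∉ matchVerts L' := by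
    rintro k ⟨f, hf, haf⟩
    exact (hk1 k).2.2 (Finset.mem_coe.mpr (Finset.mem_insert_self _ _))
      (Finset.mem_coe.mpr (Finset.mem_insert_of_mem hf))
      (fun heq => hk2 k (heq ▸ hf)) (aF k) ⟨Sym2.mem_mk_left _ _, haf⟩
  have hvnotL' : v ∉ matchVerts L' := fun h => hvnotLk k0 (matchVerts_mono (hL'sub k0) h)
  -- enumerations
  obtain ⟨eA, heAinj, heAmem⟩ := exists_enum _ (Set.toFinite _) n hA'card
  obtain ⟨eB, heBinj, heBmem⟩ := exists_enum _ (Set.toFinite _) n hBMcard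
  -- the embedding
  apply hfree
  apply contains_Hgraph_of G (n + 1) t A B hdisj
    (Fin.cases v eA) (Fin.cases b eB) uF aF
  · intro i
    induction i using Fin.cases with
    | zero => exact hvA
    | succ j => exact (heAmem j).2
  · intro i
    induction i using Fin.cases with
    | zero => exact hbB
    | succ j => exact (heBmem j).2
  · exact huB
  · exact haA
  · exact fin_cases_injective v eA heAinj (fun j h => hvnotL' (h ▸ (heAmem j).1))
  · exact fin_cases_injective b eB heBinj (fun j h => hbnotM (h ▸ (heBmem j).1))
  · exact huFinj
  · exact haFinj
  · intro i k
    induction i using Fin.cases with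
    | zero =>
      intro h
      rw [Fin.cases_zero] at h
      exact hvnotLk k (h ▸ (haLkA k).1)
    | succ j =>
      intro h
      rw [Fin.cases_succ] at h
      exact hanotL' k (h ▸ (heAmem j).1)
  · intro i k
    induction i using Fin.cases with
    | zero =>
      intro h
      rw [Fin.cases_zero] at h
      exact (huProps k).2.2 (h ▸ (hbLkB k).1)
    | succ j =>
      intro h
      rw [Fin.cases_succ] at h
      exact hunotBM k (h ▸ heBmem j)
  · intro i k
    induction i using Fin.cases with
    | zero => exact (huProps k).1
    | succ j =>
      exact adj_of_mem_commonNbrs (huProps k).2.1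
        ⟨matchVerts_mono (hL'sub k) (heAmem j).1, (heAmem j).2⟩
  · intro i k
    induction i using Fin.cases with
    | zero => exact ((haX k).2).symm
    | succ j => exact adj_of_mem_commonNbrs (haX k).1.1 (heBmem j)
  · intro i
    induction i using Fin.cases with
    | zero => exact hvb
    | succ j => exact (adj_of_mem_commonNbrs (hA'X (heAmem j)).1 (heBmem j)).symm
  · intro k
    exact (adj_of_mem_commonNbrs (huProps k).2.1 (haLkA k)).symm


lemma card_le_set_ncard {α β : Type*} (s : Finset α) (T : Set β) (f : α → β)
    (hm : ∀ a ∈ s, f a ∈ T) (hinj : Set.InjOn f ↑s) (hT : T.Finite) : s.card ≤ T.ncard := by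
  rw [Set.ncard_eq_toFinset_card T hT]
  exact Finset.card_le_card_of_injOn f (fun a ha => hT.mem_toFinset.mpr (hm a ha)) hinj


/-- Let `t ≥ s ≥ 2`, let `G` be an `H_{s,t}`-free bipartite graph with bipartition `(A, B)`
and let `M` be an `(s-1)`-matching in `G`.  Then the number of `s`-matchings `L` in `N(M)`
such that `(M, L)` is `2t`-correlated is at most
`(s-1)(t-1) · e(N(M))^{s-1} · v(N(M))`. -/
theorem correlated_matchings_count {V : Type*} [Fintype V] (G : SimpleGraph V)
    (A B : Set V) (hdisj : Disjoint A B) (hcover : A ∪ B = Set.univ)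
    (hbip : ∀ ⦃u v⦄, G.Adj u v → (u ∈ A ∧ v ∈ B) ∨ (u ∈ B ∧ v ∈ A))
    (s t : ℕ) (hs : 2 ≤ s) (hst : s ≤ t)
    (hfree : ¬ G.Contains (Hgraph s t))
    (M : Finset (Sym2 V)) (hM : IsMatchingIn G (s - 1) M) :
    {L : Finset (Sym2 V) | IsMatchingIn (nbrGraph G A B M) s L ∧
        Correlated G A B (2 * t) M L}.ncard ≤
      (s - 1) * (t - 1) * (nbrGraph G A B M).edgeSet.ncard ^ (s - 1) *
        ((commonNbrs G (matchVerts M ∩ B) \ matchVerts M) ∪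
          (commonNbrs G (matchVerts M ∩ A) \ matchVerts M)).ncard := by
  classical
  obtain ⟨n, rfl⟩ : ∃ n, s = n + 1 := ⟨s - 1, by omega⟩
  have hn : 1 ≤ n := by omega
  have hsub : n + 1 - 1 = n := by omega
  rw [hsub] at hM ⊢
  set X := commonNbrs G (matchVerts M ∩ B) \ matchVerts M with hXdef
  set Y := commonNbrs G (matchVerts M ∩ A) \ matchVerts M with hYdef
  set SS := {L : Finset (Sym2 V) | IsMatchingIn (nbrGraph G A B M) (n + 1) L ∧
      Correlated G A B (2 * t) M L} with hSSdef
  -- basic bipartite facts about M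
  have hMedge : ∀ e ∈ M, ∃ x y, e = s(x, y) ∧ x ∈ A ∧ y ∈ B := by
    intro e he
    have he' : e ∈ G.edgeSet := hM.2.1 he
    induction e using Sym2.ind with
    | _ x y =>
      rcases hbip (G.mem_edgeSet.mp he') with ⟨hx, hy⟩ | ⟨hx, hy⟩
      · exact ⟨x, y, rfl, hx, hy⟩
      · exact ⟨y, x, Sym2.eq_swap.symm, hy, hx⟩
  have hMne : M.Nonempty := Finset.card_pos.mp (by rw [hM.1]; omega)
  obtain ⟨m0, hm0⟩ := hMne
  obtain ⟨p0, q0, hm0eq, hp0A, hq0B⟩ := hMedge m0 hm0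
  have hBMne : (matchVerts M ∩ B).Nonempty :=
    ⟨q0, ⟨m0, hm0, by rw [hm0eq]; exact Sym2.mem_mk_right _ _⟩, hq0B⟩
  have hAMne : (matchVerts M ∩ A).Nonempty :=
    ⟨p0, ⟨m0, hm0, by rw [hm0eq]; exact Sym2.mem_mk_left _ _⟩, hp0A⟩
  have hXA : X ⊆ A := by
    intro u hu
    obtain ⟨w, hw⟩ := hBMne
    rcases hbip (adj_of_mem_commonNbrs hu.1 hw) with ⟨h1, h2⟩ | ⟨h1, h2⟩
    · exact absurd hw.2 (Set.disjoint_left.mp hdisj h1)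
    · exact h2
  have hYB : Y ⊆ B := by
    intro u hu
    obtain ⟨w, hw⟩ := hAMne
    rcases hbip (adj_of_mem_commonNbrs hu.1 hw) with ⟨h1, h2⟩ | ⟨h1, h2⟩
    · exact h2
    · exact absurd hw.2 (fun h => Set.disjoint_left.mp hdisj h h1)
  -- decomposition of each L in SS
  have hdecomp : ∀ L ∈ SS, ∃ d : Sym2 V × Finset (Sym2 V) × V,
      d.1 ∈ M ∧ d.2.1.card = n ∧ (↑d.2.1 : Set (Sym2 V)) ⊆ (nbrGraph G A B M).edgeSet ∧
      d.2.2 ∈ X ∪ Y ∧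
      ∃ a : V, L = insert s(a, d.2.2) d.2.1 ∧ s(a, d.2.2) ∉ d.2.1 ∧
        ∃ v, v ∈ d.1 ∧ ((d.2.2 ∈ Y ∧ v ∈ A) ∨ (d.2.2 ∈ X ∧ v ∈ B)) ∧
          2 * t ≤ ((nbrGraph G A B L).neighborSet v).ncard := by
    rintro L ⟨hmatch, hLsub, v, hvM, hdeg⟩
    obtain ⟨f, hf⟩ : L.Nonempty := Finset.card_pos.mp (by rw [hmatch.1]; omega)
    obtain ⟨xa, xb, hfeq, hadj, hxaX, hxbY⟩ := nbrGraph_edge (hmatch.2.1 hf)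
    obtain ⟨m, hm, hvm⟩ := hvM
    have hL''card : (L.erase f).card = n := by
      rw [Finset.card_erase_of_mem hf, hmatch.1]
      omega
    have hL''sub : (↑(L.erase f) : Set (Sym2 V)) ⊆ (nbrGraph G A B M).edgeSet :=
      fun e he => hmatch.2.1 (Finset.erase_subset _ _ he)
    have hvAB : v ∈ A ∪ B := hcover ▸ Set.mem_univ v
    rcases hvAB with hvA | hvB
    · refine ⟨(m, L.erase f, xb), hm, hL''card, hL''sub, Or.inr hxbY, xa, ?_, ?_,
        v, hvm, Or.inl ⟨hxbY, hvA⟩, hdeg⟩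
      · rw [← hfeq, Finset.insert_erase hf]
      · show s(xa, xb) ∉ L.erase f
        rw [← hfeq]
        exact Finset.notMem_erase _ _
    · refine ⟨(m, L.erase f, xa), hm, hL''card, hL''sub, Or.inl hxaX, xb, ?_, ?_,
        v, hvm, Or.inr ⟨hxaX, hvB⟩, hdeg⟩
      · rw [show s(xb, xa) = s(xa, xb) from Sym2.eq_swap, ← hfeq, Finset.insert_erase hf]
      · show s(xb, xa) ∉ L.erase f
        rw [show s(xb, xa) = s(xa, xb) from Sym2.eq_swap, ← hfeq]
        exact Finset.notMem_erase _ _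
  choose Φ0 hΦ0 using hdecomp
  have hSfin : SS.Finite := Set.toFinite SS
  set Sfin := hSfin.toFinset with hSfindef
  set Φ : Finset (Sym2 V) → Sym2 V × Finset (Sym2 V) × V := fun L =>
    if h : L ∈ SS then Φ0 L h else (m0, ∅, p0) with hΦdef
  have hΦspec : ∀ L (h : L ∈ SS), Φ L = Φ0 L h := fun L h => dif_pos h
  -- fiber bound
  have hfiber : ∀ d ∈ Sfin.image Φ, (Sfin.filter fun L => Φ L = d).card ≤ t - 1 := by
    rintro ⟨m, L'', x⟩ hd
    -- the distinguished vertex of m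
    have hmM : m ∈ M ∧ x ∈ X ∪ Y := by
      obtain ⟨L, hL, hΦL⟩ := Finset.mem_image.mp hd
      have hLS : L ∈ SS := hSfin.mem_toFinset.mp hL
      have h := hΦ0 L hLS
      rw [← hΦspec L hLS, hΦL] at h
      exact ⟨h.1, h.2.2.2.1⟩
    obtain ⟨p1, p2, hmeq, hp1A, hp2B⟩ := hMedge m hmM.1
    have hXYdisj : ∀ z, z ∈ X → z ∈ Y → False := fun z hzX hzY =>
      Set.disjoint_left.mp hdisj (hXA hzX) (hYB hzY)
    -- map each L in the fiber to its `a`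
    have hfib : ∀ L ∈ Sfin.filter (fun L => Φ L = (m, L'', x)), ∃ a : V,
        L = insert s(a, x) L'' ∧ s(a, x) ∉ L'' ∧
        ∃ v, v ∈ m ∧ ((x ∈ Y ∧ v ∈ A) ∨ (x ∈ X ∧ v ∈ B)) ∧
          2 * t ≤ ((nbrGraph G A B L).neighborSet v).ncard := by
      intro L hL
      obtain ⟨hL1, hL2⟩ := Finset.mem_filter.mp hL
      have hLS : L ∈ SS := hSfin.mem_toFinset.mp hL1
      have h := hΦ0 L hLS
      rw [← hΦspec L hLS, hL2] at h
      exact h.2.2.2.2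
    choose aOf haOf1 haOf2 haOf3 using hfib
    rcases Set.mem_union _ _ _ |>.mp hmM.2 with hxX | hxY
    · -- x ∈ X : the witness vertex is p2 ∈ B; apply the core bound with sides swapped
      have hbip' : ∀ ⦃u w⦄, G.Adj u w → (u ∈ B ∧ w ∈ A) ∨ (u ∈ A ∧ w ∈ B) :=
        fun u w h => (hbip h).symm
      have hp2M : p2 ∈ matchVerts M := ⟨m, hmM.1, by rw [hmeq]; exact Sym2.mem_mk_right _ _⟩
      have hcore := core_bound G B A hdisj.symm hbip' n t hn hst hfree M hM
        p2 hp2B hp2M L'' x hxX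
      simp only [nbrGraph_comm] at hcore
      refine le_trans (card_le_set_ncard _ _
        (fun L => if h : L ∈ Sfin.filter (fun L => Φ L = (m, L'', x)) then aOf L h else p0)
        ?_ ?_ (Set.toFinite _)) hcore
      · intro L hL
        simp only [dif_pos hL, Set.mem_setOf_eq]
        obtain ⟨v', hv'm, hv'cond, hdeg⟩ := haOf3 L hL
        have hv' : v' = p2 := by
          rcases hv'cond with ⟨hxY', -⟩ | ⟨-, hv'B⟩
          · exact absurd hxY' (fun h => hXYdisj x hxX h)
          · rw [hmeq] at hv'm
            rcases Sym2.mem_iff.mp hv'm with rfl | rfl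
            · exact absurd hp1A (fun h => Set.disjoint_left.mp hdisj h hv'B)
            · rfl
        subst hv'
        have hLS : L ∈ SS := hSfin.mem_toFinset.mp (Finset.mem_filter.mp hL).1
        have hmatch : IsMatchingIn (nbrGraph G A B M) (n + 1) L := hLS.1
        rw [haOf1 L hL] at hmatch hdeg
        exact ⟨hmatch, haOf2 L hL, hdeg⟩
      · intro L1 h1 L2 h2 heq
        rw [Finset.mem_coe] at h1 h2
        simp only [dif_pos h1, dif_pos h2] at heq
        rw [haOf1 L1 h1, haOf1 L2 h2, heq]
    · -- x ∈ Y : the witness vertex is p1 ∈ A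
      have hp1M : p1 ∈ matchVerts M := ⟨m, hmM.1, by rw [hmeq]; exact Sym2.mem_mk_left _ _⟩
      have hcore := core_bound G A B hdisj hbip n t hn hst hfree M hM
        p1 hp1A hp1M L'' x hxY
      refine le_trans (card_le_set_ncard _ _
        (fun L => if h : L ∈ Sfin.filter (fun L => Φ L = (m, L'', x)) then aOf L h else p0)
        ?_ ?_ (Set.toFinite _)) hcore
      · intro L hL
        simp only [dif_pos hL, Set.mem_setOf_eq]
        obtain ⟨v', hv'm, hv'cond, hdeg⟩ := haOf3 L hL
        have hv' : v' = p1 := by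
          rcases hv'cond with ⟨-, hv'A⟩ | ⟨hxX', -⟩
          · rw [hmeq] at hv'm
            rcases Sym2.mem_iff.mp hv'm with rfl | rfl
            · rfl
            · exact absurd hv'A (fun h => Set.disjoint_left.mp hdisj h hp2B)
          · exact absurd hxX' (fun h => hXYdisj x h hxY)
        subst hv'
        have hLS : L ∈ SS := hSfin.mem_toFinset.mp (Finset.mem_filter.mp hL).1
        have hmatch : IsMatchingIn (nbrGraph G A B M) (n + 1) L := hLS.1
        rw [haOf1 L hL] at hmatch hdeg
        exact ⟨hmatch, haOf2 L hL, hdeg⟩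
      · intro L1 h1 L2 h2 heq
        rw [Finset.mem_coe] at h1 h2
        simp only [dif_pos h1, dif_pos h2] at heq
        rw [haOf1 L1 h1, haOf1 L2 h2, heq]
  -- image bound
  have himage : Sfin.image Φ ⊆
      M ×ˢ (((nbrGraph G A B M).edgeSet.toFinset.powersetCard n) ×ˢ (X ∪ Y).toFinset) := by
    rintro ⟨m, L'', x⟩ hd
    obtain ⟨L, hL, hΦL⟩ := Finset.mem_image.mp hd
    have hLS : L ∈ SS := hSfin.mem_toFinset.mp hL
    have h := hΦ0 L hLS
    rw [← hΦspec L hLS, hΦL] at h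
    rw [Finset.mem_product, Finset.mem_product]
    refine ⟨h.1, ?_, ?_⟩
    · rw [Finset.mem_powersetCard]
      exact ⟨fun e he => Set.mem_toFinset.mpr (h.2.2.1 he), h.2.1⟩
    · exact Set.mem_toFinset.mpr h.2.2.2.1
  have hmain := Finset.card_le_mul_card_image Sfin (t - 1) hfiber
  have himgcard : (Sfin.image Φ).card ≤ (n + 1 - 1) * ((nbrGraph G A B M).edgeSet.ncard ^ n *
      (X ∪ Y).ncard) := by
    calc (Sfin.image Φ).card
        ≤ (M ×ˢ (((nbrGraph G A B M).edgeSet.toFinset.powersetCard n) ×ˢ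
            (X ∪ Y).toFinset)).card := Finset.card_le_card himage
      _ = M.card * (((nbrGraph G A B M).edgeSet.toFinset.powersetCard n).card *
            (X ∪ Y).toFinset.card) := by rw [Finset.card_product, Finset.card_product]
      _ ≤ (n + 1 - 1) * ((nbrGraph G A B M).edgeSet.ncard ^ n * (X ∪ Y).ncard) := by
          rw [hM.1]
          refine Nat.mul_le_mul_left _ (Nat.mul_le_mul ?_ ?_)
          · rw [Finset.card_powersetCard, ← Set.ncard_eq_toFinset_card']
            exact Nat.choose_le_pow _ _
          · rw [← Set.ncard_eq_toFinset_card']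
  have hfinal : SS.ncard = Sfin.card := Set.ncard_eq_toFinset_card _ hSfin
  rw [hfinal]
  calc Sfin.card ≤ (t - 1) * (Sfin.image Φ).card := hmain
    _ ≤ (t - 1) * ((n + 1 - 1) * ((nbrGraph G A B M).edgeSet.ncard ^ n * (X ∪ Y).ncard)) :=
        Nat.mul_le_mul_left _ himgcard
    _ = (n + 1 - 1) * (t - 1) * (nbrGraph G A B M).edgeSet.ncard ^ n * (X ∪ Y).ncard := by ring
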